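/- arXiv:1805.03238 — 2 statements merged into one kernel-verified Lean document; each statement's English description precedes it below -/
import Mathlib

section
/- Let F_q have characteristic p and let k ≥ 1. For each 1 ≤ i ≤ k set t_i = min{t ∈ Z_{≥0} : p^t ≥ ⌊k/i⌋}. Then for every 1 ≤ i ≤ k, every 0 ≤ j ≤ t_i, and every divisor d of q^i - 1, there is a polynomial f ∈ F_q[x] of degree at most k with f(0) ≠ 0 and ord(f) = p^j · d. -/
open Polynomial

open Polynomial

lemma aux_ord_pow {F : Type*} [Field F] {p : ℕ} [Fact p.Prime] [CharP F p]
    {m : F[X]} (hm0 : m ≠ 0) (hmu : ¬ IsUnit m)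
    {d : ℕ} (hd : 0 < d) (hpd : ¬ p ∣ d)
    (hdvd : ∀ n : ℕ, m ∣ X ^ n - 1 ↔ d ∣ n)
    {j s : ℕ} (hs0 : 0 < s) (hsle : s ≤ p ^ j) (hlow : ∀ a : ℕ, s ≤ p ^ a → j ≤ a) :
    IsLeast {n : ℕ | 0 < n ∧ m ^ s ∣ X ^ n - 1} (p ^ j * d) := by
  have hp : p.Prime := Fact.out
  have hppos : 0 < p := hp.pos
  constructor
  · refine ⟨by positivity, ?_⟩
    have h1 : m ∣ X ^ d - 1 := (hdvd d).mpr dvd_rfl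
    have h2 : (m : F[X]) ^ p ^ j ∣ (X ^ d - 1) ^ p ^ j := pow_dvd_pow_of_dvd h1 _
    have h3 : ((X : F[X]) ^ d - 1) ^ p ^ j = X ^ (p ^ j * d) - 1 := by
      rw [sub_pow_char_pow, ← pow_mul, one_pow, mul_comm]
    exact dvd_trans (pow_dvd_pow m hsle) (h3 ▸ h2)
  · rintro n ⟨hn, hdn⟩
    obtain ⟨a, u, hpu, hn_eq⟩ := Nat.exists_eq_pow_mul_and_not_dvd hn.ne' p hp.ne_one
    have hu0 : 0 < u := Nat.pos_of_ne_zero (fun h => by simp [h, hn_eq] at hn)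
    have hmn : m ∣ X ^ n - 1 := dvd_trans (dvd_pow_self m hs0.ne') hdn
    have hdnn : d ∣ n := (hdvd n).mp hmn
    have hcop : Nat.Coprime d (p ^ a) :=
      (Nat.Coprime.pow_right _ ((hp.coprime_iff_not_dvd.mpr hpd).symm))
    have hdu : d ∣ u := by
      refine hcop.dvd_of_dvd_mul_left ?_
      rwa [← hn_eq]
    have hXu : m ∣ X ^ u - 1 := (hdvd u).mpr hdu
    have hnu : ((u : F)) ≠ 0 := by
      rw [Ne, CharP.cast_eq_zero_iff F p]
      exact hpu
    have hsq : Squarefree ((X : F[X]) ^ u - 1) :=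
      (X_pow_sub_one_separable_iff.mpr hnu).squarefree
    have hfact : (X : F[X]) ^ n - 1 = (X ^ u - 1) ^ p ^ a := by
      rw [sub_pow_char_pow, ← pow_mul, one_pow, mul_comm u, ← hn_eq]
    obtain ⟨g, hg⟩ := hXu
    have hsa : s ≤ p ^ a := by
      by_contra hlt
      push_neg at hlt
      have h1 : m ^ (p ^ a + 1) ∣ X ^ n - 1 := dvd_trans (pow_dvd_pow m hlt) hdn
      rw [hfact, hg, mul_pow, pow_succ] at h1
      have h2 : m ∣ g ^ p ^ a :=
        (mul_dvd_mul_iff_left (pow_ne_zero _ hm0)).mp h1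
      obtain ⟨r, hr, hrm⟩ := WfDvdMonoid.exists_irreducible_factor hmu hm0
      have hrp : Prime r := hr.prime
      have hrg : r ∣ g := hrp.dvd_of_dvd_pow (dvd_trans hrm h2)
      exact hr.not_isUnit (hsq r (hg ▸ mul_dvd_mul hrm hrg))
    have hja : j ≤ a := hlow a hsa
    refine Nat.le_of_dvd hn ?_
    rw [hn_eq]
    exact mul_dvd_mul (pow_dvd_pow p hja) hdu

open Polynomial

lemma aux_exists_poly {F : Type*} [Field F] [Fintype F] (i : ℕ) (hi : 0 < i) (d : ℕ)
    (hd : d ∣ Fintype.card F ^ i - 1) :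
    ∃ m : F[X], m ≠ 0 ∧ ¬ IsUnit m ∧ m.natDegree ≤ i ∧
      ∀ n : ℕ, m ∣ X ^ n - 1 ↔ d ∣ n := by
  classical
  set q := Fintype.card F with hq
  have hq1 : 1 < q := Fintype.one_lt_card
  have hqi : 1 < q ^ i := Nat.one_lt_pow hi.ne' hq1
  set N := q ^ i - 1 with hN
  have hN0 : 0 < N := by omega
  have hNsucc : N + 1 = q ^ i := by omega
  have hd0 : 0 < d := Nat.pos_of_dvd_of_pos hd hN0
  set P : F[X] := X ^ (q ^ i) - X with hP
  set E := P.SplittingField with hE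
  haveI : FiniteDimensional F E := IsSplittingField.finiteDimensional E P
  haveI : Finite E := Module.finite_of_finite F
  haveI : Fintype E := Fintype.ofFinite E
  -- (N : F) ≠ 0
  have hNne : ((N : F)) ≠ 0 := by
    have h1 : ((N : F)) = ((q ^ i : ℕ) : F) - 1 := by
      rw [hN, Nat.cast_sub (by omega)]; push_cast; ring
    have h2 : ((q : ℕ) : F) = 0 := FiniteField.cast_card_eq_zero F
    rw [h1, Nat.cast_pow, h2, zero_pow hi.ne', zero_sub]
    exact neg_ne_zero.mpr one_ne_zero
  have hPne : P ≠ 0 := FiniteField.X_pow_card_sub_X_ne_zero F hqi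
  have hPsplits : Splits (P.map (algebraMap F E)) := SplittingField.splits P
  have hfac : P = (X ^ N - 1) * X := by
    rw [hP, ← hNsucc]; ring
  have hsplitN : Splits (((X : F[X]) ^ N - 1).map (algebraMap F E)) :=
    hPsplits.of_dvd (Polynomial.map_ne_zero hPne) (Polynomial.map_dvd _ ⟨X, hfac⟩)
  have hsep : Separable ((X : F[X]) ^ N - 1) := X_pow_sub_one_separable_iff.mpr hNne
  have hdegN : ((X : F[X]) ^ N - 1).natDegree = N := by
    rw [← C_1, natDegree_X_pow_sub_C]
  have hcard : Fintype.card (((X : F[X]) ^ N - 1).rootSet E) = N := by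
    rw [card_rootSet_eq_natDegree hsep hsplitN, hdegN]
  -- N divides card Eˣ
  set M := Fintype.card Eˣ with hM
  have hM0 : 0 < M := Fintype.card_pos
  set G := Nat.gcd N M with hG
  have hsub : ((X : F[X]) ^ N - 1).rootSet E ⊆ ((X : F[X]) ^ G - 1).rootSet E := by
    intro x hx
    rw [mem_rootSet] at hx ⊢
    obtain ⟨h1, h2⟩ := hx
    simp only [map_sub, map_pow, aeval_X, map_one] at h2 ⊢
    have hxN : x ^ N = 1 := by rwa [sub_eq_zero] at h2
    have hx0 : x ≠ 0 := by
      intro h; rw [h, zero_pow hN0.ne'] at hxN; exact zero_ne_one hxN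
    refine ⟨?_, ?_⟩
    · have := X_pow_sub_C_ne_zero (Nat.gcd_pos_of_pos_left M hN0) (1 : F)
      rwa [C_1] at this
    · set u : Eˣ := Units.mk0 x hx0 with hu
      have huN : u ^ N = 1 := by
        ext; push_cast [hu]; exact hxN
      have h3 : orderOf u ∣ G := Nat.dvd_gcd (orderOf_dvd_of_pow_eq_one huN)
        (orderOf_dvd_card)
      have h4 : u ^ G = 1 := orderOf_dvd_iff_pow_eq_one.mp h3
      have h5 : x ^ G = 1 := by
        have := congrArg (fun v : Eˣ => (v : E)) h4
        push_cast [hu] at this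
        exact this
      rw [h5, sub_self]
  have hNG : N ≤ G := by
    calc N = Nat.card (((X : F[X]) ^ N - 1).rootSet E) := by
          rw [Nat.card_eq_fintype_card, hcard]
    _ ≤ Nat.card (((X : F[X]) ^ G - 1).rootSet E) := Nat.card_mono (Set.toFinite _) hsub
    _ = ((((X : F[X]) ^ G - 1).aroots E).toFinset).card := by
          rw [rootSet_def, Nat.card_coe_set_eq, Set.ncard_coe_finset]
    _ ≤ (((X : F[X]) ^ G - 1).aroots E).card := Multiset.toFinset_card_le _
    _ ≤ (((X : F[X]) ^ G - 1).map (algebraMap F E)).natDegree := card_roots' _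
    _ = ((X : F[X]) ^ G - 1).natDegree := natDegree_map _
    _ = G := by rw [← C_1, natDegree_X_pow_sub_C]
  have hNM : N ∣ M := by
    have : G = N := le_antisymm (Nat.gcd_le_left M hN0) hNG
    rw [← this]; exact Nat.gcd_dvd_right N M
  have hdM : d ∣ M := hd.trans hNM
  -- element of order d
  obtain ⟨g0, hg0⟩ := IsCyclic.exists_ofOrder_eq_natCard (α := Eˣ)
  have hg0' : orderOf g0 = M := by rw [hg0, Nat.card_eq_fintype_card]
  set u : Eˣ := g0 ^ (M / d) with hudef
  have huord : orderOf u = d := by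
    rw [hudef, orderOf_pow, hg0', Nat.gcd_eq_right (Nat.div_dvd_of_dvd hdM),
      Nat.div_div_self hdM hM0.ne']
  set α : E := (u : E) with hα
  have hαord : orderOf α = d := by rw [hα, orderOf_units, huord]
  have hint : IsIntegral F α := .of_finite F α
  set p := ringChar F with hpdef
  haveI : CharP F p := ringChar.charP F
  obtain ⟨nn, hp, hqpn⟩ := FiniteField.card F p
  haveI : Fact p.Prime := ⟨hp⟩
  haveI : CharP E p := charP_of_injective_algebraMap (algebraMap F E).injective p
  have hqi_eq : q ^ i = p ^ (nn * i) := by rw [pow_mul, hq, hqpn]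
  refine ⟨minpoly F α, minpoly.ne_zero hint, minpoly.not_isUnit F α, ?_, ?_⟩
  · -- degree bound
    have hadj : ∀ x ∈ Algebra.adjoin F {α}, x ^ q ^ i = x := by
      intro x hx
      induction hx using Algebra.adjoin_induction with
      | mem y hy =>
        rw [Set.mem_singleton_iff] at hy
        subst hy
        have h1 : α ^ N = 1 := orderOf_dvd_iff_pow_eq_one.mp (hαord ▸ hd)
        rw [← hNsucc, pow_succ, h1, one_mul]
      | algebraMap r => rw [← map_pow, FiniteField.pow_card_pow]
      | add x y hx hy ihx ihy =>
        rw [hqi_eq, add_pow_char_pow, ← hqi_eq, ihx, ihy]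
      | mul x y hx hy ihx ihy => rw [mul_pow, ihx, ihy]
    set K := IntermediateField.adjoin F {α} with hK
    have hKA : K.toSubalgebra = Algebra.adjoin F {α} :=
      IntermediateField.adjoin_simple_toSubalgebra_of_isAlgebraic hint.isAlgebraic
    have hfin : Module.finrank F K = (minpoly F α).natDegree :=
      IntermediateField.adjoin.finrank hint
    haveI : Fintype K := Fintype.ofFinite K
    have hcardK : Fintype.card K = q ^ Module.finrank F K := Module.card_eq_pow_finrank
    have hroots : ∀ y : K, y ^ q ^ i = y := by
      intro y
      have hy : (y : E) ∈ Algebra.adjoin F {α} := by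
        rw [← hKA]; exact y.2
      have h6 : (y : E) ^ q ^ i = y := hadj _ hy
      exact Subtype.ext (by push_cast; exact h6)
    have hle : Fintype.card K ≤ q ^ i := by
      have hQ : ((X : Polynomial K) ^ q ^ i - X) ≠ 0 :=
        FiniteField.X_pow_card_sub_X_ne_zero K hqi
      have hsub2 : (Finset.univ : Finset K) ⊆
          ((X : Polynomial K) ^ q ^ i - X).roots.toFinset := by
        intro y _
        rw [Multiset.mem_toFinset, mem_roots hQ]
        simp [IsRoot, sub_eq_zero, hroots y]
      calc Fintype.card K = (Finset.univ : Finset K).card := rfl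
        _ ≤ _ := Finset.card_le_card hsub2
        _ ≤ ((X : Polynomial K) ^ q ^ i - X).roots.card := Multiset.toFinset_card_le _
        _ ≤ _ := card_roots' _
        _ = q ^ i := FiniteField.X_pow_card_sub_X_natDegree_eq K hqi
    rw [← hfin]
    have h7 := hcardK ▸ hle
    exact (Nat.pow_le_pow_iff_right hq1).mp h7
  · -- divisibility characterization
    intro n
    constructor
    · intro h
      obtain ⟨c, hc⟩ := h
      have h0 : (aeval α) ((X : F[X]) ^ n - 1) = 0 := by
        rw [hc, map_mul, minpoly.aeval, zero_mul]
      simp only [map_sub, map_pow, aeval_X, map_one, sub_eq_zero] at h0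
      rw [← hαord]
      exact orderOf_dvd_of_pow_eq_one h0
    · intro h
      apply minpoly.dvd
      simp only [map_sub, map_pow, aeval_X, map_one, sub_eq_zero]
      exact orderOf_dvd_iff_pow_eq_one.mp (hαord ▸ h)



/-- Containment `⋃_{i=1}^k {p^j : 0 ≤ j ≤ t_i} · D(q^i - 1) ⊆ O(k, F_q)`: for each
`1 ≤ i ≤ k`, `t_i` the least `t` with `p ^ t ≥ ⌊k / i⌋`, each `0 ≤ j ≤ t_i` and each
divisor `d` of `q^i - 1`, there is a polynomial of degree at most `k` with nonzero
constant term and order `p ^ j * d`. -/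
theorem stmt_16 {F : Type*} [Field F] [Fintype F] (k : ℕ) (hk : 1 ≤ k) :
    ∀ i : ℕ, 1 ≤ i → i ≤ k →
    ∀ t_i : ℕ, IsLeast {t : ℕ | k / i ≤ (ringChar F) ^ t} t_i →
    ∀ j : ℕ, j ≤ t_i →
    ∀ d : ℕ, d ∣ Fintype.card F ^ i - 1 →
      ∃ f : Polynomial F, f.natDegree ≤ k ∧ f.eval 0 ≠ 0 ∧
        IsLeast {n : ℕ | 0 < n ∧ f ∣ Polynomial.X ^ n - 1}
          ((ringChar F) ^ j * d) := by
  intro i hi1 hik t_i ht j hj d hd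
  set p := ringChar F with hpdef
  haveI : CharP F p := ringChar.charP F
  have hp : p.Prime := CharP.char_is_prime F p
  haveI : Fact p.Prime := ⟨hp⟩
  have hq1 : 1 < Fintype.card F := Fintype.one_lt_card
  have hqi : 1 < Fintype.card F ^ i := Nat.one_lt_pow (by omega) hq1
  have hd0 : 0 < d := Nat.pos_of_dvd_of_pos hd (by omega)
  have hpd : ¬ p ∣ d := by
    intro hcon
    obtain ⟨nn, hp', hqn⟩ := FiniteField.card F p
    have h1 : p ∣ Fintype.card F := hqn ▸ dvd_pow_self p nn.ne_zero
    have h3 : p ∣ Fintype.card F ^ i := h1.trans (dvd_pow_self _ (by omega))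
    have h4 : p ∣ 1 := by
      have := Nat.dvd_sub h3 (hcon.trans hd)
      rwa [Nat.sub_sub_self hqi.le] at this
    exact hp.ne_one (Nat.dvd_one.mp h4)
  obtain ⟨m, hm0, hmu, hmdeg, hmdvd⟩ := aux_exists_poly i (by omega) d hd
  set s : ℕ := if j = 0 then 1 else p ^ (j - 1) + 1 with hsdef
  have hs0 : 0 < s := by rw [hsdef]; split <;> omega
  have hsle : s ≤ p ^ j := by
    rcases Nat.eq_zero_or_pos j with h | h
    · simp [hsdef, h]
    · rw [hsdef, if_neg h.ne']
      have : p ^ (j - 1) < p ^ j := Nat.pow_lt_pow_right hp.one_lt (by omega)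
      omega
  have hlow : ∀ a : ℕ, s ≤ p ^ a → j ≤ a := by
    intro a ha
    rcases Nat.eq_zero_or_pos j with h | h
    · omega
    · rw [hsdef, if_neg h.ne'] at ha
      have : j - 1 < a := (Nat.pow_lt_pow_iff_right hp.one_lt).mp (by omega)
      omega
  have hsk : s * i ≤ k := by
    rcases Nat.eq_zero_or_pos j with h | h
    · rw [hsdef, if_pos h]; omega
    · have hlt : p ^ (j - 1) < k / i := by
        by_contra hcon
        push_neg at hcon
        have : t_i ≤ j - 1 := ht.2 hcon
        omega
      have hs_le : s ≤ k / i := by rw [hsdef, if_neg h.ne']; omega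
      calc s * i ≤ (k / i) * i := Nat.mul_le_mul_right i hs_le
      _ ≤ k := Nat.div_mul_le_self k i
  have hleast := aux_ord_pow (p := p) hm0 hmu hd0 hpd hmdvd hs0 hsle hlow
  refine ⟨m ^ s, ?_, ?_, hleast⟩
  · rw [natDegree_pow]
    calc s * m.natDegree ≤ s * i := Nat.mul_le_mul_left s hmdeg
    _ ≤ k := hsk
  · intro hcon
    have h5 : (m ^ s) ∣ X ^ (p ^ j * d) - 1 := hleast.1.2
    have h6 := eval_dvd (x := (0 : F)) h5
    rw [hcon, eval_sub, eval_pow, eval_X, eval_one,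
      zero_pow (by have := pow_pos hp.pos j; exact Nat.mul_ne_zero this.ne' hd0.ne' : p ^ j * d ≠ 0), zero_sub] at h6
    have := zero_dvd_iff.mp h6
    simp at this
end

section
/- Let R = F_{q_1} ⊕ ... ⊕ F_{q_r} with r > 1 and let k ≥ 1. Then every sequence over R satisfying a degree-k linear recurrence with unit lowest coefficient has period at most ∏_{i=1}^r (q_i^k - 1), which is strictly less than |R|^k - 1; hence the maximum period |R|^k - 1 is achieved for some recurrence and initial state if and only if r = 1 (i.e., R is a field). -/
open Finset Polynomial


section LemmaA
variable {K : Type*} [Field K] [Fintype K] [DecidableEq K]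

private lemma aux_period_of_eq_state {k : ℕ} (hk : 0 < k) (c : Fin k → K) (a : ℕ → K)
    (hc : c ⟨0, hk⟩ ≠ 0) (hrec : ∀ n, a (n + k) = ∑ i : Fin k, c i * a (n + i.1))
    {i j : ℕ} (hij : i < j)
    (hs : (fun t : Fin k => a (i + t.1)) = (fun t : Fin k => a (j + t.1))) :
    ∀ n, a (n + (j - i)) = a n := by
  set s : ℕ → Fin k → K := fun n t => a (n + t.1) with hs_def
  -- forward propagation
  have hfwd : ∀ n m : ℕ, s n = s m → ∀ t, a (n + t) = a (m + t) := by
    intro n m h t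
    induction t using Nat.strong_induction_on with
    | _ t ih =>
      rcases lt_or_ge t k with ht | ht
      · exact congrFun h ⟨t, ht⟩
      · obtain ⟨u, rfl⟩ := Nat.exists_eq_add_of_le ht
        have e1 : a (n + (k + u)) = ∑ i : Fin k, c i * a ((n + u) + i.1) := by
          rw [show n + (k + u) = (n + u) + k by ring]; exact hrec (n + u)
        have e2 : a (m + (k + u)) = ∑ i : Fin k, c i * a ((m + u) + i.1) := by
          rw [show m + (k + u) = (m + u) + k by ring]; exact hrec (m + u)
        rw [e1, e2]
        refine Finset.sum_congr rfl fun i _ => ?_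
        have : a (n + (u + i.1)) = a (m + (u + i.1)) :=
          ih (u + i.1) (by omega)
        rw [show (n + u) + i.1 = n + (u + i.1) by ring,
          show (m + u) + i.1 = m + (u + i.1) by ring, this]
  -- backward propagation one step
  have hbwd : ∀ n m : ℕ, s (n + 1) = s (m + 1) → s n = s m := by
    intro n m h
    have h' : ∀ t, 1 ≤ t → t ≤ k → a (n + t) = a (m + t) := by
      intro t h1 h2
      rcases eq_or_lt_of_le h2 with rfl | h2
      · have := hfwd (n+1) (m+1) h (t - 1)
        rwa [show n + 1 + (t-1) = n + t by omega, show m + 1 + (t-1) = m + t by omega] at this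
      · have := congrFun h ⟨t - 1, by omega⟩
        simp only [s] at this
        rwa [show n + 1 + (t-1) = n + t by omega, show m + 1 + (t-1) = m + t by omega] at this
    have hz : (⟨0, hk⟩ : Fin k) ∈ (Finset.univ : Finset (Fin k)) := Finset.mem_univ _
    have e1 := hrec n
    have e2 := hrec m
    rw [← Finset.add_sum_erase _ _ hz] at e1 e2
    have hsum : ∑ i ∈ Finset.univ.erase ⟨0, hk⟩, c i * a (n + i.1)
        = ∑ i ∈ Finset.univ.erase ⟨0, hk⟩, c i * a (m + i.1) := by
      refine Finset.sum_congr rfl fun i hi => ?_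
      have hi0 : i.1 ≠ 0 := by
        intro h0
        exact (Finset.mem_erase.mp hi).1 (Fin.ext h0)
      rw [h' i.1 (by omega) (le_of_lt i.2)]
    have hk' : a (n + k) = a (m + k) := h' k hk le_rfl
    have : c ⟨0, hk⟩ * a (n + 0) = c ⟨0, hk⟩ * a (m + 0) := by
      have := e1.symm.trans (hk'.trans e2)
      rw [hsum] at this
      exact add_right_cancel this
    have key : a n = a m := by
      have := mul_left_cancel₀ hc this
      simpa using this
    funext t
    rcases Nat.eq_zero_or_pos t.1 with h0 | hpos
    · simpa [s, h0] using key
    · exact h' t.1 hpos (le_of_lt t.2)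
  -- backward propagation many steps
  have hbwdj : ∀ (j' n m : ℕ), s (n + j') = s (m + j') → s n = s m := by
    intro j'
    induction j' with
    | zero => simpa using fun n m h => h
    | succ j' ih =>
      intro n m h
      exact ih n m (hbwd (n + j') (m + j')
        (by rwa [show n + j' + 1 = n + (j'+1) by ring, show m + j' + 1 = m + (j'+1) by ring]))
  have h0 : s 0 = s (j - i) := by
    apply hbwdj i
    rw [Nat.zero_add, show j - i + i = j from Nat.sub_add_cancel hij.le]
    exact hs
  intro n
  have := hfwd 0 (j - i) h0 n
  rw [Nat.zero_add] at this
  rw [Nat.add_comm n (j-i)]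
  exact this.symm

private lemma exists_period_le {k : ℕ} (hk : 0 < k) (c : Fin k → K) (a : ℕ → K)
    (hc : c ⟨0, hk⟩ ≠ 0) (hrec : ∀ n, a (n + k) = ∑ i : Fin k, c i * a (n + i.1)) :
    ∃ m, 0 < m ∧ m ≤ Fintype.card K ^ k - 1 ∧ ∀ n, a (n + m) = a n := by
  have hq2 : 2 ≤ Fintype.card K := Fintype.one_lt_card
  have hqk : 2 ≤ Fintype.card K ^ k := le_trans hq2 (Nat.le_self_pow hk.ne' _)
  set s : ℕ → Fin k → K := fun n t => a (n + t.1) with hs_def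
  by_cases hzero : ∃ n, s n = 0
  · obtain ⟨n, hn⟩ := hzero
    have hn1 : s (n + 1) = 0 := by
      funext t
      rcases lt_or_ge (t.1 + 1) k with ht | ht
      · have := congrFun hn ⟨t.1 + 1, ht⟩
        simpa [s, show n + 1 + t.1 = n + (t.1 + 1) by ring] using this
      · have htk : t.1 + 1 = k := by omega
        have : a (n + 1 + t.1) = a (n + k) := by rw [show n + 1 + t.1 = n + k by omega]
        rw [hs_def]
        simp only []
        rw [this, hrec n]
        refine Finset.sum_eq_zero fun i _ => ?_
        have := congrFun hn i
        simp only [s, Pi.zero_apply] at this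
        rw [this, mul_zero]
    refine ⟨1, one_pos, by omega, ?_⟩
    have := aux_period_of_eq_state hk c a hc hrec (Nat.lt_succ_self n) (hn.trans hn1.symm)
    simpa using this
  · push_neg at hzero
    set N := Fintype.card K ^ k with hN
    have hcard : Fintype.card {v : Fin k → K // v ≠ 0} < Fintype.card (Fin N) := by
      rw [Fintype.card_fin]
      have : Fintype.card {v : Fin k → K // v ≠ 0} = N - 1 := by
        rw [Fintype.card_subtype_compl, Fintype.card_subtype_eq]
        simp [hN, Fintype.card_fun]
      omega
    obtain ⟨i, j, hij, hval⟩ := Fintype.exists_ne_map_eq_of_card_lt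
      (fun n : Fin N => (⟨s n.1, hzero n.1⟩ : {v : Fin k → K // v ≠ 0})) hcard
    have hsv : s i.1 = s j.1 := congrArg Subtype.val hval
    rcases Ne.lt_or_gt (fun h : i.1 = j.1 => hij (Fin.ext h)) with h | h
    · exact ⟨j.1 - i.1, by omega, by have := j.2; omega,
        aux_period_of_eq_state hk c a hc hrec h hsv⟩
    · exact ⟨i.1 - j.1, by omega, by have := i.2; omega,
        aux_period_of_eq_state hk c a hc hrec h hsv.symm⟩

end LemmaA


private lemma nat_key_le {x y : ℕ} (hx : 1 ≤ x) (hy : 1 ≤ y) :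
    (x - 1) * (y - 1) ≤ x * y - 1 := by
  obtain ⟨x', rfl⟩ := Nat.exists_eq_add_of_le hx
  obtain ⟨y', rfl⟩ := Nat.exists_eq_add_of_le hy
  rw [Nat.add_sub_cancel_left, Nat.add_sub_cancel_left,
    show (1 + x') * (1 + y') = (x' + y' + x' * y') + 1 by ring, Nat.add_sub_cancel]
  exact Nat.le_add_left _ _

private lemma nat_key_lt {x y : ℕ} (hx : 2 ≤ x) (hy : 2 ≤ y) :
    (x - 1) * (y - 1) < x * y - 1 := by
  obtain ⟨x', rfl⟩ := Nat.exists_eq_add_of_le hx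
  obtain ⟨y', rfl⟩ := Nat.exists_eq_add_of_le hy
  rw [show 2 + x' - 1 = 1 + x' by omega, show 2 + y' - 1 = 1 + y' by omega,
    show (2 + x') * (2 + y') = (2 + x' + y' + (1 + x') * (1 + y')) + 1 by ring,
    Nat.add_sub_cancel]
  exact Nat.lt_add_of_pos_left (by omega)

private lemma prod_sub_one_le {ι : Type*} (s : Finset ι) (f : ι → ℕ)
    (h1 : ∀ i ∈ s, 1 ≤ f i) (hs : s.Nonempty) :
    ∏ i ∈ s, (f i - 1) ≤ (∏ i ∈ s, f i) - 1 := by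
  induction hs using Finset.Nonempty.cons_induction with
  | singleton a => simp
  | cons a t ha ht ih =>
    rw [Finset.prod_cons, Finset.prod_cons]
    have hfa : 1 ≤ f a := h1 a (Finset.mem_cons_self a t)
    have h1t : ∀ i ∈ t, 1 ≤ f i := fun i hi => h1 i (Finset.mem_cons_of_mem hi)
    have hP : 1 ≤ ∏ i ∈ t, f i := Finset.one_le_prod' h1t
    calc (f a - 1) * ∏ i ∈ t, (f i - 1) ≤ (f a - 1) * ((∏ i ∈ t, f i) - 1) :=
          Nat.mul_le_mul_left _ (ih h1t)
      _ ≤ f a * (∏ i ∈ t, f i) - 1 := nat_key_le hfa hP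

private lemma prod_sub_one_lt {ι : Type*} (s : Finset ι) (f : ι → ℕ)
    (h2 : ∀ i ∈ s, 2 ≤ f i) (hs : 2 ≤ s.card) :
    ∏ i ∈ s, (f i - 1) < (∏ i ∈ s, f i) - 1 := by
  classical
  obtain ⟨a, ha⟩ := Finset.card_pos.mp (by omega : 0 < s.card)
  have hprod : ∀ g : ι → ℕ, ∏ i ∈ s, g i = g a * ∏ i ∈ s.erase a, g i := fun g =>
    (Finset.mul_prod_erase s g ha).symm
  rw [hprod, hprod]
  set t := s.erase a with ht
  have htne : t.Nonempty :=
    Finset.card_pos.mp (by rw [ht, Finset.card_erase_of_mem ha]; omega)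
  have h2t : ∀ i ∈ t, 2 ≤ f i := fun i hi => h2 i (Finset.mem_of_mem_erase hi)
  have hfa : 2 ≤ f a := h2 a ha
  have hP : 2 ≤ ∏ i ∈ t, f i := by
    obtain ⟨b, hb⟩ := htne
    calc 2 ≤ f b := h2t b hb
      _ ≤ ∏ i ∈ t, f i := Finset.single_le_prod' (fun i hi => by have := h2t i hi; omega) hb
  calc (f a - 1) * ∏ i ∈ t, (f i - 1) ≤ (f a - 1) * ((∏ i ∈ t, f i) - 1) :=
        Nat.mul_le_mul_left _ (prod_sub_one_le t f (fun i hi => by have := h2t i hi; omega) htne)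
    _ < f a * (∏ i ∈ t, f i) - 1 := nat_key_lt hfa hP

private lemma period_dvd {α : Type*} {f : ℕ → α} {m M : ℕ} (h : ∀ n, f (n + m) = f n)
    (hdvd : m ∣ M) : ∀ n, f (n + M) = f n := by
  obtain ⟨t, rfl⟩ := hdvd
  induction t with
  | zero => simp
  | succ t ih =>
    intro n
    rw [show n + m * (t + 1) = (n + m * t) + m by ring, h, ih]

section Part1
variable {r k : ℕ}

private lemma part1 (hr : 0 < r) (hk : 0 < k) (F : Fin r → Type*) [∀ i, Field (F i)]
    [∀ i, Fintype (F i)] (c : Fin k → (∀ i, F i)) (a : ℕ → (∀ i, F i))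
    (hc : IsUnit (c ⟨0, hk⟩))
    (hrec : ∀ n, a (n + k) = ∑ i : Fin k, c i * a (n + i.1))
    (ρ : ℕ) (hρ : IsLeast {m : ℕ | 0 < m ∧ ∀ n : ℕ, a (n + m) = a n} ρ) :
    ρ ≤ ∏ i : Fin r, (Fintype.card (F i) ^ k - 1) := by
  classical
  have hcomp : ∀ i : Fin r, ∃ m, 0 < m ∧ m ≤ Fintype.card (F i) ^ k - 1 ∧
      ∀ n, a (n + m) i = a n i := by
    intro i
    have hci : (fun j : Fin k => c j i) ⟨0, hk⟩ ≠ 0 := by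
      have := hc.map (Pi.evalRingHom F i)
      exact IsUnit.ne_zero this
    refine exists_period_le hk (fun j => c j i) (fun n => a n i) hci ?_
    intro n
    have := congrFun (hrec n) i
    simpa [Finset.sum_apply] using this
  choose m hm0 hmle hmper using hcomp
  set M := ∏ i : Fin r, m i with hM
  have hMpos : 0 < M := Finset.prod_pos fun i _ => hm0 i
  have hMper : ∀ n, a (n + M) = a n := by
    intro n
    funext i
    exact period_dvd (f := fun n => a n i) (hmper i) (Finset.dvd_prod_of_mem m (Finset.mem_univ i)) n
  have hMle : M ≤ ∏ i : Fin r, (Fintype.card (F i) ^ k - 1) :=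
    Finset.prod_le_prod' fun i _ => hmle i
  exact le_trans (hρ.2 ⟨hMpos, hMper⟩) hMle

end Part1


private lemma exists_max_period (K : Type*) [Field K] [Fintype K] {k : ℕ} (hk : 0 < k) :
    ∃ (c : Fin k → K) (a : ℕ → K), c ⟨0, hk⟩ ≠ 0 ∧
      (∀ n, a (n + k) = ∑ i : Fin k, c i * a (n + i.1)) ∧
      IsLeast {m : ℕ | 0 < m ∧ ∀ n : ℕ, a (n + m) = a n} (Fintype.card K ^ k - 1) := by
  classical
  set q := Fintype.card K with hq
  have hq2 : 1 < q := Fintype.one_lt_card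
  obtain ⟨p, hcp⟩ := CharP.exists K
  haveI : CharP K p := hcp
  obtain ⟨n, hp, hqpn⟩ := FiniteField.card K p
  rw [← hq] at hqpn
  haveI hfact : Fact p.Prime := ⟨hp⟩
  set g : Polynomial K := X ^ (q ^ k) - X with hg
  set E := Polynomial.SplittingField g with hE
  have hqk1 : 1 < q ^ k := Nat.one_lt_pow hk.ne' hq2
  have hgne : g ≠ 0 := FiniteField.X_pow_card_sub_X_ne_zero K hqk1
  have hpdvd : p ∣ q ^ k := dvd_trans (by rw [hqpn]; exact dvd_pow_self p n.2.ne') (dvd_pow_self q hk.ne')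
  have hsep : g.Separable := galois_poly_separable p (q ^ k) hpdvd
  haveI : Finite E := Module.finite_of_finite K
  haveI : Fintype E := Fintype.ofFinite E
  haveI : CharP E p := charP_of_injective_algebraMap' (A := E) K p
  haveI : ExpChar E p := ExpChar.prime hp
  -- every element of E is a root of g
  have hroot_all : ∀ x : E, x ^ (q ^ k) = x := by
    have halg : ∀ r : K, (algebraMap K E r) ^ (q ^ k) = algebraMap K E r := by
      intro r
      rw [← map_pow, FiniteField.pow_card_pow]
    set φ : E →+* E := iterateFrobenius E p (n * k) with hφdef
    have hφ : ∀ x : E, φ x = x ^ (q ^ k) := by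
      intro x
      rw [hφdef, iterateFrobenius_def, hqpn, ← pow_mul]
    set S : Subalgebra K E :=
      { RingHom.eqLocus φ (RingHom.id E) with
        algebraMap_mem' := fun r => by
          show φ _ = RingHom.id E _
          rw [hφ]; exact halg r } with hSdef
    have hS : S = ⊤ := by
      rw [eq_top_iff, ← Polynomial.SplittingField.adjoin_rootSet g, Algebra.adjoin_le_iff]
      intro x hx
      rw [Polynomial.mem_rootSet_of_ne hgne] at hx
      have hx' : x ^ (q ^ k) = x := by
        have : x ^ (q ^ k) - x = 0 := by
          simpa [hg, map_sub, aeval_X_pow, aeval_X] using hx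
        linear_combination this
      show φ x = RingHom.id E x
      rw [hφ, hx']; rfl
    intro x
    have hx : x ∈ S := hS.symm ▸ Algebra.mem_top
    have : φ x = RingHom.id E x := hx
    rw [hφ] at this
    exact this
  -- cardinality of E
  have hcardE : Fintype.card E = q ^ k := by
    have key : Fintype.card (g.rootSet E) = g.natDegree :=
      Polynomial.card_rootSet_eq_natDegree hsep (Polynomial.SplittingField.splits g)
    have hdeg : g.natDegree = q ^ k := FiniteField.X_pow_card_sub_X_natDegree_eq K hqk1
    have huniv : g.rootSet E = Set.univ := by
      rw [Set.eq_univ_iff_forall]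
      intro x
      rw [Polynomial.mem_rootSet_of_ne hgne]
      simp [hg, map_sub, aeval_X_pow, aeval_X, hroot_all x, sub_eq_zero]
    calc Fintype.card E = Fintype.card (g.rootSet E) :=
          (Fintype.card_congr ((Equiv.setCongr huniv).trans (Equiv.Set.univ E))).symm
      _ = g.natDegree := key
      _ = q ^ k := hdeg
  have hrank : Module.finrank K E = k := by
    have hcard2 : Fintype.card E = q ^ Module.finrank K E := Module.card_eq_pow_finrank
    rw [hcardE] at hcard2
    exact (Nat.pow_right_injective hq2 hcard2).symm
  -- primitive element
  obtain ⟨g0, hg0⟩ := IsCyclic.exists_generator (α := Eˣ)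
  set α : E := (g0 : E) with hα
  have hα0 : α ≠ 0 := g0.ne_zero
  have hαint : IsIntegral K α := IsIntegral.of_finite K α
  set P := minpoly K α with hPdef
  have hmonic : P.Monic := minpoly.monic hαint
  have hPdeg : P.natDegree = k := by
    have hadj : IntermediateField.adjoin K {α} = ⊤ := by
      rw [eq_top_iff]
      intro x _
      by_cases hx : x = 0
      · rw [hx]; exact zero_mem _
      · obtain ⟨m, hm⟩ := mem_powers_iff_mem_zpowers.mpr (hg0 (Units.mk0 x hx))
        have hxm : α ^ m = x := by
          have := congrArg (Units.val) hm
          simpa [Units.val_pow_eq_pow_val] using this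
        rw [← hxm]
        exact pow_mem (IntermediateField.mem_adjoin_simple_self K α) m
    have h1 : Module.finrank K (IntermediateField.adjoin K {α}) = P.natDegree :=
      IntermediateField.adjoin.finrank hαint
    rw [hadj, IntermediateField.finrank_top', hrank] at h1
    exact h1.symm
  have hck : P.coeff k = 1 := by
    have := hmonic.coeff_natDegree
    rwa [hPdeg] at this
  have hc0 : P.coeff 0 ≠ 0 := minpoly.coeff_zero_ne_zero hαint hα0
  -- the recurrence relation for powers of α
  have hαk : α ^ k = ∑ i : Fin k, algebraMap K E (-(P.coeff i.1)) * α ^ (i : ℕ) := by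
    have h0 := minpoly.aeval K α
    rw [Polynomial.aeval_eq_sum_range, hPdeg, Finset.sum_range_succ, hck, one_smul] at h0
    have h1 : α ^ k = -∑ i ∈ Finset.range k, P.coeff i • α ^ i :=
      eq_neg_of_add_eq_zero_right h0
    rw [h1, ← Finset.sum_neg_distrib,
      Fin.sum_univ_eq_sum_range (fun i => algebraMap K E (-(P.coeff i)) * α ^ i)]
    refine Finset.sum_congr rfl fun i _ => ?_
    rw [← neg_smul, Algebra.smul_def, map_neg]
  -- the linear functional
  set B := Module.finBasis K E with hB
  have hkpos' : 0 < Module.finrank K E := by rw [hrank]; exact hk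
  set j : Fin (Module.finrank K E) := ⟨0, hkpos'⟩ with hj
  set T : E →ₗ[K] K := B.coord j with hT
  have hTB : T (B j) = 1 := by
    rw [hT, Module.Basis.coord_apply, Module.Basis.repr_self, Finsupp.single_eq_same]
  have hBj0 : B j ≠ 0 := B.ne_zero j
  -- order of α
  have hordα : orderOf α = q ^ k - 1 := by
    rw [hα, orderOf_units, orderOf_eq_card_of_forall_mem_zpowers hg0,
      Nat.card_units, Nat.card_eq_fintype_card, hcardE]
  have hαpow : α ^ (q ^ k - 1) = 1 := by
    rw [← hordα]; exact pow_orderOf_eq_one α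
  refine ⟨fun i => -(P.coeff i.1), fun m => T (α ^ m), ?_, ?_, ⟨by omega, ?_⟩, ?_⟩
  · exact neg_ne_zero.mpr hc0
  · intro m
    show T (α ^ (m + k)) = ∑ i : Fin k, -P.coeff i.1 * T (α ^ (m + i.1))
    rw [pow_add, hαk, Finset.mul_sum, map_sum]
    refine Finset.sum_congr rfl fun i _ => ?_
    have : α ^ m * (algebraMap K E (-(P.coeff i.1)) * α ^ (i : ℕ))
        = (-(P.coeff i.1)) • α ^ (m + i.1) := by
      rw [Algebra.smul_def, pow_add]; ring
    rw [this, map_smul, smul_eq_mul]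
  · intro m
    show T (α ^ (m + (q ^ k - 1))) = T (α ^ m)
    rw [pow_add, hαpow, mul_one]
  · rintro m ⟨hm0, hmper⟩
    have hαm : α ^ m = 1 := by
      by_contra hne
      have hβ : α ^ m - 1 ≠ 0 := sub_ne_zero.mpr hne
      set u : Eˣ := Units.mk0 (α ^ m - 1) hβ with hu
      set ux : Eˣ := Units.mk0 (B j) hBj0 with hux
      obtain ⟨t, ht⟩ := mem_powers_iff_mem_zpowers.mpr (hg0 (ux * u⁻¹))
      have ht2 : g0 ^ t = ux * u⁻¹ := ht
      have ht' : g0 ^ t * u = ux := by rw [ht2]; group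
      have hx : α ^ t * (α ^ m - 1) = B j := by
        have := congrArg (Units.val) ht'
        rw [Units.val_mul] at this
        simpa [hu, hux, Units.val_pow_eq_pow_val] using this
      have h0 : T (B j) = 0 := by
        have h1 : T (α ^ (t + m)) = T (α ^ t) := hmper t
        have h2 : T (α ^ t * (α ^ m - 1)) = 0 := by
          rw [mul_sub, mul_one, ← pow_add, map_sub, h1, sub_self]
        rwa [hx] at h2
      rw [hTB] at h0
      exact one_ne_zero h0
    have hdvd := orderOf_dvd_of_pow_eq_one hαm
    rw [hordα] at hdvd
    exact Nat.le_of_dvd hm0 hdvd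

private def piUniqueRingEquiv {ι : Type*} [Unique ι] (M : ι → Type*)
    [∀ i, NonAssocSemiring (M i)] : (∀ i, M i) ≃+* M default :=
  { Equiv.piUnique M with
    map_mul' := fun _ _ => rfl
    map_add' := fun _ _ => rfl }

/-- Over `R = F_{q_1} ⊕ ... ⊕ F_{q_r}`: every sequence satisfying a degree-`k`
linear recurrence with unit lowest coefficient has period at most
`∏ (q_i ^ k - 1)`; if `r > 1` this bound is strictly less than `|R|^k - 1`;
and the maximum period `|R|^k - 1` is achieved iff `r = 1` (`R` is a field). -/
theorem stmt_19 (r k : ℕ) (hr : 0 < r) (hk : 0 < k)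
    (F : Fin r → Type*) [∀ i, Field (F i)] [∀ i, Fintype (F i)] :
    (∀ (c : Fin k → (∀ i, F i)) (a : ℕ → (∀ i, F i)),
        IsUnit (c ⟨0, hk⟩) →
        (∀ n, a (n + k) = ∑ i : Fin k, c i * a (n + i.1)) →
        ∀ ρ : ℕ, IsLeast {m : ℕ | 0 < m ∧ ∀ n : ℕ, a (n + m) = a n} ρ →
          ρ ≤ ∏ i : Fin r, (Fintype.card (F i) ^ k - 1)) ∧
    (1 < r →
      ∏ i : Fin r, (Fintype.card (F i) ^ k - 1) <
        Fintype.card (∀ i, F i) ^ k - 1) ∧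
    ((∃ (c : Fin k → (∀ i, F i)) (a : ℕ → (∀ i, F i)),
        IsUnit (c ⟨0, hk⟩) ∧
        (∀ n, a (n + k) = ∑ i : Fin k, c i * a (n + i.1)) ∧
        IsLeast {m : ℕ | 0 < m ∧ ∀ n : ℕ, a (n + m) = a n}
          (Fintype.card (∀ i, F i) ^ k - 1)) ↔ r = 1) := by
  have hpart2 : 1 < r →
      ∏ i : Fin r, (Fintype.card (F i) ^ k - 1) <
        Fintype.card (∀ i, F i) ^ k - 1 := by
    intro hr2
    have hcard : Fintype.card (∀ i, F i) = ∏ i : Fin r, Fintype.card (F i) :=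
      Fintype.card_pi
    rw [hcard, ← Finset.prod_pow]
    exact prod_sub_one_lt Finset.univ (fun i => Fintype.card (F i) ^ k)
      (fun i _ => le_trans Fintype.one_lt_card (Nat.le_self_pow hk.ne' _))
      (by simpa using Nat.succ_le_of_lt hr2)
  refine ⟨part1 hr hk F, hpart2, ?_, ?_⟩
  · -- max period achieved → r = 1
    rintro ⟨c, a, hc, hrec, hleast⟩
    by_contra hne
    have hr2 : 1 < r := by omega
    have h1 := part1 hr hk F c a hc hrec _ hleast
    have h2 := hpart2 hr2
    omega
  · -- r = 1 → max period achieved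
    rintro rfl
    obtain ⟨c0, a0, hc0, hrec0, hleast0⟩ := exists_max_period (F default) hk
    set e := piUniqueRingEquiv F with he
    refine ⟨fun j => e.symm (c0 j), fun n => e.symm (a0 n), ?_, ?_, ?_⟩
    · exact (isUnit_iff_ne_zero.mpr hc0).map e.symm
    · intro n
      show e.symm (a0 (n + k)) = ∑ i : Fin k, e.symm (c0 i) * e.symm (a0 (n + i.1))
      rw [hrec0 n, map_sum]
      exact Finset.sum_congr rfl fun i _ => (map_mul e.symm _ _)
    · have hcardeq : Fintype.card (∀ i, F i) = Fintype.card (F default) :=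
        Fintype.card_congr (Equiv.piUnique F)
      rw [hcardeq]
      constructor
      · exact ⟨hleast0.1.1, fun n => congrArg e.symm (hleast0.1.2 n)⟩
      · rintro m ⟨hm0, hmper⟩
        exact hleast0.2 ⟨hm0, fun n => e.symm.injective (hmper n)⟩
end
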